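/- Let n be a positive integer, A an n×n alternating sign matrix, and A* the matrix defined by A*_{i j} = A_{i,n+1−j} (reflection of A in a central vertical line). Then A* is an n×n alternating sign matrix and ν(A*) = n(n−1)/2 − ν(A) − μ(A), μ(A*) = μ(A), and ρ(A*) = n−1−ρ(A). -/

import Mathlib

open Finset Matrix

/-- An n×n alternating sign matrix: entries in {-1,0,1}, row and column sums 1,
and nonzero entries alternate in sign along each row and each column. -/
def IsASM (n : ℕ) (A : Matrix (Fin n) (Fin n) ℤ) : Prop :=
  (∀ i j, A i j = -1 ∨ A i j = 0 ∨ A i j = 1) ∧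
  (∀ i, ∑ j, A i j = 1) ∧
  (∀ j, ∑ i, A i j = 1) ∧
  (∀ (i j₁ j₂ : Fin n), j₁ < j₂ → A i j₁ ≠ 0 → A i j₂ ≠ 0 →
    (∀ j, j₁ < j → j < j₂ → A i j = 0) → A i j₂ = -A i j₁) ∧
  (∀ (j i₁ i₂ : Fin n), i₁ < i₂ → A i₁ j ≠ 0 → A i₂ j ≠ 0 →
    (∀ i, i₁ < i → i < i₂ → A i j = 0) → A i₂ j = -A i₁ j)

/-- ν(A) = ∑_{1≤i<i'≤n, 1≤j'≤j≤n} A_{i j} A_{i' j'}. -/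
def nuASM {n : ℕ} (A : Matrix (Fin n) (Fin n) ℤ) : ℤ :=
  ∑ i : Fin n, ∑ i' : Fin n, ∑ j : Fin n, ∑ j' : Fin n,
    if i < i' ∧ j' ≤ j then A i j * A i' j' else 0

/-- μ(A) = number of entries of A equal to -1. -/
def muASM {n : ℕ} (A : Matrix (Fin n) (Fin n) ℤ) : ℕ :=
  (Finset.univ.filter fun p : Fin n × Fin n => A p.1 p.2 = -1).card

/-- ρ(A) = number of 0's to the left of the (unique) 1 in the first row of A. -/
def rhoASM {n : ℕ} (A : Matrix (Fin n) (Fin n) ℤ) : ℕ :=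
  (@Finset.filter _ (fun j : Fin n =>
    ∃ i : Fin n, (i : ℕ) = 0 ∧ A i j = 0 ∧ ∃ j' : Fin n, j < j' ∧ A i j' = 1)
    (fun _ => @Fintype.decidableExistsFintype _ _ (fun _ => instDecidableAnd) _) Finset.univ).card

/-- Vertical reflection A*_{i j} = A_{i,n+1−j} is an ASM, and
ν(A*) = n(n−1)/2 − ν(A) − μ(A), μ(A*) = μ(A), ρ(A*) = n−1−ρ(A). -/

private lemma card_lt_eq (n : ℕ) (c : Fin n) : (univ.filter (· < c)).card = c := by
  have : univ.filter (· < c) = Iio c := by ext j; simp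
  rw [this, Fin.card_Iio]

private def psum {n : ℕ} (f : Fin n → ℤ) (m : ℕ) : ℤ :=
  ∑ i : Fin n, if (i : ℕ) < m then f i else 0

private lemma psum_zero {n : ℕ} (f : Fin n → ℤ) : psum f 0 = 0 := by simp [psum]

private lemma psum_succ {n : ℕ} (f : Fin n → ℤ) (m : ℕ) (hm : m < n) :
    psum f (m + 1) = psum f m + f ⟨m, hm⟩ := by
  unfold psum
  have h : ∀ i : Fin n, (if (i : ℕ) < m + 1 then f i else 0) =
      (if (i : ℕ) < m then f i else 0) + (if i = ⟨m, hm⟩ then f i else 0) := by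
    intro i
    by_cases hi : (i : ℕ) = m
    · rw [if_pos (by omega), if_neg (by omega), if_pos (Fin.ext hi), zero_add]
    · by_cases hlt : (i : ℕ) < m
      · rw [if_pos (by omega), if_pos hlt, if_neg (by intro h; subst h; exact hi rfl), add_zero]
      · rw [if_neg (by omega), if_neg hlt, if_neg (by intro h; subst h; exact hi rfl), add_zero]
  rw [Finset.sum_congr rfl (fun i _ => h i), Finset.sum_add_distrib]
  congr 1
  simp

private lemma psum_top {n : ℕ} (f : Fin n → ℤ) : psum f n = ∑ i, f i :=
  Finset.sum_congr rfl fun i _ => if_pos i.isLt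

private lemma top_not_neg_one {n : ℕ} (hn : 0 < n) (f : Fin n → ℤ)
    (h1 : ∀ i, f i = -1 ∨ f i = 0 ∨ f i = 1)
    (hs : ∑ i, f i = 1)
    (halt : ∀ i₁ i₂ : Fin n, i₁ < i₂ → f i₁ ≠ 0 → f i₂ ≠ 0 →
      (∀ i, i₁ < i → i < i₂ → f i = 0) → f i₂ = -f i₁) :
    f ⟨0, hn⟩ ≠ -1 := by
  intro hneg
  have key : ∀ m, 1 ≤ m → m ≤ n → ∃ k : Fin n, (k : ℕ) < m ∧ f k ≠ 0 ∧
      (∀ j : Fin n, k < j → (j : ℕ) < m → f j = 0) ∧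
      ((psum f m = 0 ∧ f k = 1) ∨ (psum f m = -1 ∧ f k = -1)) := by
    intro m hm1
    induction m, hm1 using Nat.le_induction with
    | base =>
      intro _
      refine ⟨⟨0, hn⟩, by simp, by rw [hneg]; norm_num, ?_, ?_⟩
      · intro j hj hj1
        rw [Fin.lt_def] at hj
        exfalso; omega
      · right
        refine ⟨?_, hneg⟩
        have h := psum_succ f 0 hn
        rw [psum_zero, zero_add] at h
        rw [h, hneg]; norm_num
    | succ m hm ih =>
      intro hmn
      obtain ⟨k, hk, hk0, hkz, hks⟩ := ih (by omega)
      have hmlt : m < n := by omega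
      by_cases hfi : f ⟨m, hmlt⟩ = 0
      · refine ⟨k, by omega, hk0, ?_, ?_⟩
        · intro j hj hjm
          rcases Nat.lt_or_ge (j : ℕ) m with h | h
          · exact hkz j hj h
          · have : j = ⟨m, hmlt⟩ := Fin.ext (show (j : ℕ) = m by omega)
            rw [this]; exact hfi
        · rw [psum_succ f m hmlt, hfi, add_zero]; exact hks
      · have hki : k < (⟨m, hmlt⟩ : Fin n) := by rw [Fin.lt_def]; exact hk
        have halt' := halt k ⟨m, hmlt⟩ hki hk0 hfi
          (fun j hj1 hj2 => hkz j hj1 (by rw [Fin.lt_def] at hj2; exact hj2))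
        refine ⟨⟨m, hmlt⟩, by simp, hfi, ?_, ?_⟩
        · intro j hj hjm
          rw [Fin.lt_def] at hj
          exfalso
          have : (j : ℕ) > m := hj
          omega
        · rw [psum_succ f m hmlt]
          rcases hks with ⟨h0, hk1⟩ | ⟨h0, hk1⟩
          · right
            rw [halt', hk1, h0]
            norm_num
          · left
            rw [halt', hk1, h0]
            norm_num
  obtain ⟨k, _, _, _, hs'⟩ := key n (by omega) le_rfl
  rw [psum_top, hs] at hs'
  rcases hs' with ⟨h0, _⟩ | ⟨h0, _⟩ <;> omega

private lemma row0_struct {n : ℕ} (hn : 0 < n) (A : Matrix (Fin n) (Fin n) ℤ)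
    (hA : IsASM n A) : ∃ c : Fin n, A ⟨0, hn⟩ c = 1 ∧ ∀ j, j ≠ c → A ⟨0, hn⟩ j = 0 := by
  obtain ⟨hent, hrow, hcol, hralt, hcalt⟩ := hA
  have hno : ∀ j, A ⟨0, hn⟩ j ≠ -1 := fun j =>
    top_not_neg_one hn (fun i => A i j) (fun i => hent i j) (hcol j)
      (fun i₁ i₂ h a b c => hcalt j i₁ i₂ h a b c)
  have h01 : ∀ j, A ⟨0, hn⟩ j = 0 ∨ A ⟨0, hn⟩ j = 1 := by
    intro j; rcases hent ⟨0, hn⟩ j with h | h | h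
    · exact absurd h (hno j)
    · exact Or.inl h
    · exact Or.inr h
  have hcast : (∑ j, A ⟨0, hn⟩ j) = (((univ.filter fun j => A ⟨0, hn⟩ j = 1).card : ℕ) : ℤ) := by
    rw [Finset.card_filter]
    push_cast
    apply Finset.sum_congr rfl
    intro j _
    rcases h01 j with h | h <;> simp [h]
  have hcard : (univ.filter fun j => A ⟨0, hn⟩ j = 1).card = 1 := by
    have := hcast.symm.trans (hrow ⟨0, hn⟩)
    exact_mod_cast this
  obtain ⟨c, hc⟩ := Finset.card_eq_one.mp hcard
  have hc1 : A ⟨0, hn⟩ c = 1 := by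
    have : c ∈ univ.filter fun j => A ⟨0, hn⟩ j = 1 := by
      rw [hc]; exact Finset.mem_singleton_self c
    simpa using this
  refine ⟨c, hc1, fun j hj => ?_⟩
  rcases h01 j with h | h
  · exact h
  · exfalso; apply hj
    have : j ∈ univ.filter fun j => A ⟨0, hn⟩ j = 1 := by simp [h]
    rw [hc] at this; simpa using this

private lemma rho_eq {n : ℕ} (hn : 0 < n) (A : Matrix (Fin n) (Fin n) ℤ) (c : Fin n)
    (hc1 : A ⟨0, hn⟩ c = 1) (hc0 : ∀ j, j ≠ c → A ⟨0, hn⟩ j = 0) :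
    rhoASM A = c := by
  unfold rhoASM
  have hset : (@Finset.filter _ (fun j : Fin n => ∃ i : Fin n, (i : ℕ) = 0 ∧ A i j = 0 ∧
      ∃ j' : Fin n, j < j' ∧ A i j' = 1)
      (fun _ => @Fintype.decidableExistsFintype _ _ (fun _ => instDecidableAnd) _) Finset.univ) = univ.filter (· < c) := by
    ext j
    simp only [Finset.mem_filter, Finset.mem_univ, true_and]
    constructor
    · rintro ⟨i, hi0, hz, j', hjj', h1'⟩
      have hi : i = ⟨0, hn⟩ := Fin.ext hi0
      subst hi
      have hj'c : j' = c := by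
        by_contra h
        rw [hc0 j' h] at h1'; norm_num at h1'
      rwa [hj'c] at hjj'
    · intro hjc
      exact ⟨⟨0, hn⟩, rfl, hc0 j (ne_of_lt hjc), c, hjc, hc1⟩
  rw [hset, card_lt_eq]

private lemma mu_rev {n : ℕ} (A : Matrix (Fin n) (Fin n) ℤ) :
    muASM (Matrix.of fun i j => A i j.rev) = muASM A := by
  unfold muASM
  apply Finset.card_bij' (fun (p : Fin n × Fin n) _ => (p.1, p.2.rev)) (fun (p : Fin n × Fin n) _ => (p.1, p.2.rev)) <;>
    simp [Matrix.of_apply]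
  all_goals intro a b h
  · exact (Finset.mem_filter.mp h).2
  · exact Finset.mem_filter.mpr ⟨Finset.mem_univ _, by simpa using h⟩

private lemma isASM_rev {n : ℕ} (A : Matrix (Fin n) (Fin n) ℤ) (hA : IsASM n A) :
    IsASM n (Matrix.of fun i j => A i j.rev) := by
  obtain ⟨hent, hrow, hcol, hralt, hcalt⟩ := hA
  refine ⟨fun i j => hent i j.rev, ?_, fun j => hcol j.rev, ?_,
    fun j i₁ i₂ h a b c => hcalt j.rev i₁ i₂ h a b c⟩
  · intro i
    calc ∑ j : Fin n, (Matrix.of fun i j => A i j.rev) i j = ∑ j : Fin n, A i (Fin.revPerm j) := rfl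
      _ = ∑ j, A i j := Equiv.sum_comp Fin.revPerm (A i)
      _ = 1 := hrow i
  · intro i j₁ j₂ hlt hne1 hne2 hz
    show A i j₂.rev = -(A i j₁.rev)
    have h21 : j₂.rev < j₁.rev := Fin.rev_lt_rev.mpr hlt
    have hmid : ∀ j, j₂.rev < j → j < j₁.rev → A i j = 0 := by
      intro j hj1 hj2
      have h1 : j₁ < j.rev := Fin.rev_lt_rev.mp (by rw [Fin.rev_rev]; exact hj2)
      have h2 : j.rev < j₂ := Fin.rev_lt_rev.mp (by rw [Fin.rev_rev]; exact hj1)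
      have h3 : A i j.rev.rev = 0 := hz j.rev h1 h2
      rwa [Fin.rev_rev] at h3
    have := hralt i j₂.rev j₁.rev h21 hne2 hne1 hmid
    rw [this, neg_neg]

private lemma nu_rev_eq {n : ℕ} (A : Matrix (Fin n) (Fin n) ℤ) :
    nuASM (Matrix.of fun i j => A i j.rev) =
      ∑ i : Fin n, ∑ i' : Fin n, ∑ j : Fin n, ∑ j' : Fin n,
        if i < i' ∧ j ≤ j' then A i j * A i' j' else 0 := by
  unfold nuASM
  apply Finset.sum_congr rfl; intro i _
  apply Finset.sum_congr rfl; intro i' _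
  calc ∑ j : Fin n, ∑ j' : Fin n,
        (if i < i' ∧ j' ≤ j then (Matrix.of fun i j => A i j.rev) i j *
          (Matrix.of fun i j => A i j.rev) i' j' else 0)
      = ∑ j : Fin n, ∑ j' : Fin n,
        (if i < i' ∧ j.rev ≤ j'.rev then A i j.rev * A i' j'.rev else 0) := by
        apply Finset.sum_congr rfl; intro j _
        apply Finset.sum_congr rfl; intro j' _
        rw [Matrix.of_apply, Matrix.of_apply]
        congr 1
        rw [eq_iff_iff, and_congr_right_iff]
        intro _
        exact (Fin.rev_le_rev).symm
    _ = ∑ j : Fin n, ∑ j' : Fin n,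
        (if i < i' ∧ j.rev ≤ j' then A i j.rev * A i' j' else 0) := by
        apply Finset.sum_congr rfl; intro j _
        exact Equiv.sum_comp Fin.revPerm
          (fun j' => if i < i' ∧ j.rev ≤ j' then A i j.rev * A i' j' else 0)
    _ = ∑ j : Fin n, ∑ j' : Fin n, (if i < i' ∧ j ≤ j' then A i j * A i' j' else 0) :=
        Equiv.sum_comp Fin.revPerm
          (fun j => ∑ j' : Fin n, if i < i' ∧ j ≤ j' then A i j * A i' j' else 0)

private lemma pair_sq {n : ℕ} (x : Fin n → ℤ) :
    2 * (∑ i : Fin n, ∑ i' : Fin n, if i < i' then x i * x i' else 0) =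
      (∑ i, x i) * (∑ i, x i) - ∑ i, x i * x i := by
  have hsplit : ∀ i i' : Fin n, x i * x i' =
      (if i < i' then x i * x i' else 0) + (if i' < i then x i * x i' else 0) +
        (if i = i' then x i * x i' else 0) := by
    intro i i'
    rcases lt_trichotomy i i' with h | h | h
    · rw [if_pos h, if_neg (asymm h), if_neg (ne_of_lt h), add_zero, add_zero]
    · subst h; rw [if_neg (lt_irrefl i), if_pos rfl, zero_add, zero_add]
    · rw [if_neg (asymm h), if_pos h, if_neg (ne_of_gt h), add_zero, zero_add]
  have e1 : (∑ i, x i) * (∑ i, x i) = ∑ i : Fin n, ∑ i' : Fin n, x i * x i' :=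
    Finset.sum_mul_sum univ univ x x
  rw [e1, Finset.sum_congr rfl fun i _ => Finset.sum_congr rfl fun i' _ => hsplit i i']
  simp only [Finset.sum_add_distrib]
  have hS' : (∑ i : Fin n, ∑ i' : Fin n, if i' < i then x i * x i' else 0) =
      ∑ i : Fin n, ∑ i' : Fin n, if i < i' then x i * x i' else 0 := by
    rw [Finset.sum_comm]
    apply Finset.sum_congr rfl; intro i _
    apply Finset.sum_congr rfl; intro i' _
    exact if_congr Iff.rfl (mul_comm _ _) rfl
  have hD : (∑ i : Fin n, ∑ i' : Fin n, if i = i' then x i * x i' else 0) =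
      ∑ i, x i * x i := by
    apply Finset.sum_congr rfl; intro i _
    simp [Finset.sum_ite_eq]
  rw [hS', hD]
  ring

private lemma nu_key {n : ℕ} (hn : 0 < n) (A : Matrix (Fin n) (Fin n) ℤ) (hA : IsASM n A) :
    2 * (nuASM A + (∑ i : Fin n, ∑ i' : Fin n, ∑ j : Fin n, ∑ j' : Fin n,
        if i < i' ∧ j ≤ j' then A i j * A i' j' else 0) + (muASM A : ℤ)) =
      (n : ℤ) * ((n : ℤ) - 1) := by
  obtain ⟨hent, hrow, hcol, -, -⟩ := hA
  -- combine the two nu-sums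
  have hcomb : nuASM A + (∑ i : Fin n, ∑ i' : Fin n, ∑ j : Fin n, ∑ j' : Fin n,
      if i < i' ∧ j ≤ j' then A i j * A i' j' else 0) =
      (∑ i : Fin n, ∑ i' : Fin n, ∑ j : Fin n, ∑ j' : Fin n,
        if i < i' then A i j * A i' j' else 0) +
      (∑ i : Fin n, ∑ i' : Fin n, ∑ j : Fin n, ∑ j' : Fin n,
        if i < i' ∧ j = j' then A i j * A i' j' else 0) := by
    unfold nuASM
    simp only [← Finset.sum_add_distrib]
    apply Finset.sum_congr rfl; intro i _
    apply Finset.sum_congr rfl; intro i' _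
    apply Finset.sum_congr rfl; intro j _
    apply Finset.sum_congr rfl; intro j' _
    by_cases hii : i < i'
    · simp only [hii, true_and, if_true]
      by_cases hjj : j = j'
      · subst hjj; simp
      · rcases Ne.lt_or_gt hjj with h | h
        · rw [if_neg (not_le.mpr h), if_pos h.le, if_neg hjj, zero_add, add_zero]
        · rw [if_pos h.le, if_neg (not_le.mpr h), if_neg hjj, add_zero]
    · simp [hii]
  -- T1
  have hT1 : (∑ i : Fin n, ∑ i' : Fin n, ∑ j : Fin n, ∑ j' : Fin n,
      if i < i' then A i j * A i' j' else 0) =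
      ∑ i : Fin n, ∑ i' : Fin n, if i < i' then (1 : ℤ) else 0 := by
    apply Finset.sum_congr rfl; intro i _
    apply Finset.sum_congr rfl; intro i' _
    by_cases h : i < i'
    · simp only [h, if_true]
      rw [← Finset.sum_mul_sum univ univ (A i) (A i'), hrow i, hrow i', mul_one]
    · simp [h]
  have hN : (∑ i : Fin n, ∑ i' : Fin n, if i < i' then (1 : ℤ) else 0) * 2 =
      (n : ℤ) * ((n : ℤ) - 1) := by
    rw [Finset.sum_comm]
    have h1 : ∀ i' : Fin n, (∑ i : Fin n, if i < i' then (1 : ℤ) else 0) = ((i' : ℕ) : ℤ) := by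
      intro i'
      rw [Finset.sum_boole]
      norm_cast
      exact card_lt_eq n i'
    rw [Finset.sum_congr rfl fun i' _ => h1 i']
    have h2 : (∑ i' : Fin n, ((i' : ℕ) : ℤ)) = ((∑ k ∈ Finset.range n, k : ℕ) : ℤ) := by
      rw [Nat.cast_sum]
      exact Fin.sum_univ_eq_sum_range (fun k => ((k : ℕ) : ℤ)) n
    rw [h2]
    have h3 := Finset.sum_range_id_mul_two n
    have h4 : (((∑ k ∈ Finset.range n, k) * 2 : ℕ) : ℤ) = ((n * (n - 1) : ℕ) : ℤ) := by
      exact_mod_cast h3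
    rw [Nat.cast_mul, Nat.cast_mul, Nat.cast_sub (by omega : 1 ≤ n)] at h4
    simpa using h4
  -- T2
  have hT2a : (∑ i : Fin n, ∑ i' : Fin n, ∑ j : Fin n, ∑ j' : Fin n,
      if i < i' ∧ j = j' then A i j * A i' j' else 0) =
      ∑ j : Fin n, ∑ i : Fin n, ∑ i' : Fin n, if i < i' then A i j * A i' j else 0 := by
    calc (∑ i : Fin n, ∑ i' : Fin n, ∑ j : Fin n, ∑ j' : Fin n,
        if i < i' ∧ j = j' then A i j * A i' j' else 0)
        = ∑ i : Fin n, ∑ i' : Fin n, ∑ j : Fin n, if i < i' then A i j * A i' j else 0 := by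
          apply Finset.sum_congr rfl; intro i _
          apply Finset.sum_congr rfl; intro i' _
          apply Finset.sum_congr rfl; intro j _
          by_cases h : i < i'
          · simp only [h, true_and, if_true]
            simp [Finset.sum_ite_eq]
          · simp [h]
      _ = ∑ i : Fin n, ∑ j : Fin n, ∑ i' : Fin n, if i < i' then A i j * A i' j else 0 := by
          apply Finset.sum_congr rfl; intro i _
          exact Finset.sum_comm
      _ = ∑ j : Fin n, ∑ i : Fin n, ∑ i' : Fin n, if i < i' then A i j * A i' j else 0 :=
          Finset.sum_comm
  -- mu as a double sum
  have hmu : (muASM A : ℤ) = ∑ j : Fin n, ∑ i : Fin n,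
      (if A i j = -1 then (1 : ℤ) else 0) := by
    unfold muASM
    rw [Finset.card_filter]
    push_cast
    rw [← Finset.univ_product_univ, Finset.sum_product]
    exact Finset.sum_comm
  -- sum of squares
  have hsq : (∑ j : Fin n, ∑ i : Fin n, A i j * A i j) = (n : ℤ) + 2 * (muASM A : ℤ) := by
    have hpt : ∀ i j : Fin n, A i j * A i j =
        A i j + 2 * (if A i j = -1 then (1 : ℤ) else 0) := by
      intro i j
      rcases hent i j with h | h | h <;> rw [h] <;> norm_num
    calc (∑ j : Fin n, ∑ i : Fin n, A i j * A i j)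
        = ∑ j : Fin n, ∑ i : Fin n, (A i j + 2 * (if A i j = -1 then (1 : ℤ) else 0)) := by
          apply Finset.sum_congr rfl; intro j _
          exact Finset.sum_congr rfl fun i _ => hpt i j
      _ = (∑ j : Fin n, ∑ i : Fin n, A i j) +
          2 * (∑ j : Fin n, ∑ i : Fin n, (if A i j = -1 then (1 : ℤ) else 0)) := by
          simp only [Finset.sum_add_distrib, Finset.mul_sum]
      _ = (n : ℤ) + 2 * (muASM A : ℤ) := by
          rw [← hmu]
          congr 1
          rw [Finset.sum_congr rfl fun j _ => hcol j]
          simp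
  -- per-column pair sum
  have hT2 : 2 * (∑ j : Fin n, ∑ i : Fin n, ∑ i' : Fin n,
      if i < i' then A i j * A i' j else 0) = -2 * (muASM A : ℤ) := by
    rw [Finset.mul_sum]
    calc (∑ j : Fin n, 2 * ∑ i : Fin n, ∑ i' : Fin n, if i < i' then A i j * A i' j else 0)
        = ∑ j : Fin n, ((∑ i, A i j) * (∑ i, A i j) - ∑ i, A i j * A i j) := by
          apply Finset.sum_congr rfl; intro j _
          exact pair_sq (fun i => A i j)
      _ = ∑ j : Fin n, (1 - ∑ i, A i j * A i j) := by
          apply Finset.sum_congr rfl; intro j _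
          rw [hcol j, one_mul]
      _ = (n : ℤ) - ∑ j : Fin n, ∑ i, A i j * A i j := by
          rw [Finset.sum_sub_distrib]
          simp
      _ = -2 * (muASM A : ℤ) := by rw [hsq]; ring
  rw [hcomb, hT1, hT2a]
  linarith [hN, hT2]
theorem ASM_reflection (n : ℕ) (hn : 0 < n) (A : Matrix (Fin n) (Fin n) ℤ)
    (hA : IsASM n A) :
    IsASM n (Matrix.of fun i j => A i j.rev) ∧
    nuASM (Matrix.of fun i j => A i j.rev) =
      (n : ℤ) * ((n : ℤ) - 1) / 2 - nuASM A - muASM A ∧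
    muASM (Matrix.of fun i j => A i j.rev) = muASM A ∧
    rhoASM (Matrix.of fun i j => A i j.rev) = n - 1 - rhoASM A := by
  refine ⟨isASM_rev A hA, ?_, mu_rev A, ?_⟩
  · have hk := nu_key hn A hA
    rw [nu_rev_eq A]
    omega
  · obtain ⟨c, hc1, hc0⟩ := row0_struct hn A hA
    have h1 : rhoASM A = c := rho_eq hn A c hc1 hc0
    have hc1' : (Matrix.of fun i j => A i j.rev) ⟨0, hn⟩ c.rev = 1 := by
      show A ⟨0, hn⟩ c.rev.rev = 1
      rwa [Fin.rev_rev]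
    have hc0' : ∀ j, j ≠ c.rev → (Matrix.of fun i j => A i j.rev) ⟨0, hn⟩ j = 0 := by
      intro j hj
      show A ⟨0, hn⟩ j.rev = 0
      apply hc0
      intro h
      apply hj
      rw [← h, Fin.rev_rev]
    have h2 := rho_eq hn _ c.rev hc1' hc0'
    rw [h1, h2, Fin.val_rev]
    have := c.isLt
    omega
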